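/- For a finite directed graph with rational edge weights and initial vertex, the infimum over all infinite paths of the limit-average value is attained, and equals the minimum over all reachable cycles of the average cycle weight. Moreover there is a minimizing infinite path (an ultimately periodic lasso run) whose partial averages converge (limsup equals liminf). -/

import Mathlib

open Filter Finset

/-- Limit-average value of an infinite path. -/
noncomputable def pathLimAvg {V : Type*} (wt : V → V → ℚ) (π : ℕ → V) : ℝ :=
  Filter.limsup
    (fun k => (∑ i ∈ Finset.range k, (wt (π i) (π (i + 1)) : ℝ)) / (k : ℝ)) atTop

/-- The set of average weights of cycles reachable from `v0`. -/
def cycleAvgs {V : Type*} (E : V → V → Prop) (wt : V → V → ℚ) (v0 : V) : Set ℝ :=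
  {x | ∃ (p : ℕ → V) (s ℓ : ℕ), 0 < ℓ ∧ p 0 = v0 ∧
    (∀ i, i < s + ℓ → E (p i) (p (i + 1))) ∧ p (s + ℓ) = p s ∧
    x = (∑ j ∈ Finset.range ℓ, (wt (p (s + j)) (p (s + j + 1)) : ℝ)) / (ℓ : ℝ)}


private lemma pigeon {V : Type*} [Fintype V] (q : ℕ → V) :
    ∃ i j, i < j ∧ j ≤ Fintype.card V ∧ q i = q j := by
  obtain ⟨i, j, hne, he⟩ := Fintype.exists_ne_map_eq_of_card_lt
    (fun i : Fin (Fintype.card V + 1) => q i) (by simp)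
  rcases lt_or_gt_of_ne (fun h => hne (Fin.ext h) : (i:ℕ) ≠ j) with h | h
  · exact ⟨i, j, h, by omega, he⟩
  · exact ⟨j, i, h, by omega, he.symm⟩

private lemma periodic_sum (g : ℕ → ℝ) (ℓ : ℕ) (hℓ : 0 < ℓ) :
    ∀ m, ∑ t ∈ range m, g (t % ℓ) =
      ((m / ℓ : ℕ) : ℝ) * (∑ j ∈ range ℓ, g j) + ∑ j ∈ range (m % ℓ), g j := by
  intro m
  induction m using Nat.strong_induction_on with
  | _ m ih =>
    by_cases hm : m < ℓ
    · rw [Nat.div_eq_of_lt hm, Nat.mod_eq_of_lt hm]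
      simp only [Nat.cast_zero, zero_mul, zero_add]
      exact Finset.sum_congr rfl fun t ht => by
        rw [Nat.mod_eq_of_lt (lt_of_lt_of_le (mem_range.1 ht) hm.le)]
    · push_neg at hm
      have hsplit : m = ℓ + (m - ℓ) := by omega
      rw [hsplit, Finset.sum_range_add]
      have h1 : ∑ t ∈ range ℓ, g (t % ℓ) = ∑ j ∈ range ℓ, g j :=
        Finset.sum_congr rfl fun t ht => by rw [Nat.mod_eq_of_lt (mem_range.1 ht)]
      have h2 : ∑ t ∈ range (m - ℓ), g ((ℓ + t) % ℓ) = ∑ t ∈ range (m - ℓ), g (t % ℓ) :=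
        Finset.sum_congr rfl fun t ht => by rw [Nat.add_mod_left]
      rw [h1, h2, ih (m - ℓ) (by omega)]
      have hd : (ℓ + (m - ℓ)) / ℓ = (m - ℓ) / ℓ + 1 := by
        rw [Nat.add_comm, Nat.add_div_right _ hℓ]
      have hmo : (ℓ + (m - ℓ)) % ℓ = (m - ℓ) % ℓ := by
        rw [Nat.add_comm, Nat.add_mod_right]
      rw [hd, hmo]
      push_cast
      ring

private lemma splice_sum {V : Type*} (wt : V → V → ℚ) (p : ℕ → V) (i d k : ℕ)
    (hid : p (i + d) = p i) (hk : i + d ≤ k) :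
    ∑ t ∈ range (k - d), (wt ((fun t => if t < i then p t else p (t + d)) t)
        ((fun t => if t < i then p t else p (t + d)) (t + 1)) : ℝ) =
      ∑ t ∈ range k, (wt (p t) (p (t + 1)) : ℝ)
        - ∑ t ∈ range d, (wt (p (i + t)) (p (i + t + 1)) : ℝ) := by
  set q : ℕ → V := fun t => if t < i then p t else p (t + d) with hq
  have hq1 : ∀ t, t < i → q t = p t := fun t ht => if_pos ht
  have hq2 : ∀ t, i ≤ t → q t = p (t + d) := fun t ht => if_neg (by omega)
  have hsplit1 : k - d = i + (k - d - i) := by omega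
  have hsplit2 : k = i + (d + (k - i - d)) := by omega
  rw [hsplit1, Finset.sum_range_add]
  conv_rhs => rw [hsplit2, Finset.sum_range_add, Finset.sum_range_add]
  have e1 : ∀ t ∈ range i, (wt (q t) (q (t+1)) : ℝ) = (wt (p t) (p (t+1)) : ℝ) := by
    intro t ht
    have ht' := mem_range.1 ht
    rw [hq1 t ht']
    rcases Nat.lt_or_ge (t+1) i with h | h
    · rw [hq1 _ h]
    · have : t + 1 = i := by omega
      rw [hq2 _ h, this, hid]
  have e2 : ∀ t ∈ range (k - d - i),
      (wt (q (i + t)) (q (i + t + 1)) : ℝ) = (wt (p (i + d + t)) (p (i + d + t + 1)) : ℝ) := by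
    intro t ht
    rw [hq2 _ (by omega), hq2 _ (by omega),
      show i + t + d = i + d + t from by omega,
      show i + t + 1 + d = i + d + t + 1 from by omega]
  rw [Finset.sum_congr rfl e1, Finset.sum_congr rfl e2]
  have e3 : ∑ t ∈ range (k - d - i), (wt (p (i + d + t)) (p (i + d + t + 1)) : ℝ)
      = ∑ t ∈ range (k - i - d), (wt (p (i + d + t)) (p (i + d + t + 1)) : ℝ) := by
    rw [show k - d - i = k - i - d from by omega]
  have e4 : ∑ t ∈ range (k - i - d), (wt (p (i + (d + t))) (p (i + (d + t) + 1)) : ℝ)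
      = ∑ t ∈ range (k - i - d), (wt (p (i + d + t)) (p (i + d + t + 1)) : ℝ) := by
    apply Finset.sum_congr rfl
    intro t _
    rw [show i + (d + t) = i + d + t from by omega]
  rw [e3, ← e4]
  ring

private lemma mod_succ_eq' (a ℓ : ℕ) : (a + 1) % ℓ = (a % ℓ + 1) % ℓ := by
  conv_lhs => rw [← Nat.div_add_mod a ℓ]
  rw [Nat.add_assoc, Nat.add_comm (ℓ * (a / ℓ)), Nat.add_mul_mod_self_left]

private lemma abs_sub_le_abs_add_abs (a b : ℝ) : |a - b| ≤ |a| + |b| := by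
  rw [sub_eq_add_neg]
  exact (abs_add_le _ _).trans (by rw [abs_neg])

private lemma periodic_sum' (g : ℕ → ℝ) (ℓ : ℕ) (hℓ : 0 < ℓ) :
    ∀ m, ∑ t ∈ range m, g (t % ℓ) =
      ((m / ℓ : ℕ) : ℝ) * (∑ j ∈ range ℓ, g j) + ∑ j ∈ range (m % ℓ), g j := by
  intro m
  induction m using Nat.strong_induction_on with
  | _ m ih =>
    by_cases hm : m < ℓ
    · rw [Nat.div_eq_of_lt hm, Nat.mod_eq_of_lt hm]
      simp only [Nat.cast_zero, zero_mul, zero_add]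
      exact Finset.sum_congr rfl fun t ht => by
        rw [Nat.mod_eq_of_lt (lt_of_lt_of_le (mem_range.1 ht) hm.le)]
    · push_neg at hm
      have hsplit : m = ℓ + (m - ℓ) := by omega
      rw [hsplit, Finset.sum_range_add]
      have h1 : ∑ t ∈ range ℓ, g (t % ℓ) = ∑ j ∈ range ℓ, g j :=
        Finset.sum_congr rfl fun t ht => by rw [Nat.mod_eq_of_lt (mem_range.1 ht)]
      have h2 : ∑ t ∈ range (m - ℓ), g ((ℓ + t) % ℓ) = ∑ t ∈ range (m - ℓ), g (t % ℓ) :=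
        Finset.sum_congr rfl fun t ht => by rw [Nat.add_mod_left]
      rw [h1, h2, ih (m - ℓ) (by omega)]
      have hd : (ℓ + (m - ℓ)) / ℓ = (m - ℓ) / ℓ + 1 := by
        rw [Nat.add_comm, Nat.add_div_right _ hℓ]
      have hmo : (ℓ + (m - ℓ)) % ℓ = (m - ℓ) % ℓ := by
        rw [Nat.add_comm, Nat.add_mod_right]
      rw [hd, hmo]
      push_cast
      ring

private lemma loop_path {V : Type*} (E : V → V → Prop) (wt : V → V → ℚ) (v0 : V)
    (p : ℕ → V) (s ℓ : ℕ) (hℓ : 0 < ℓ) (hp0 : p 0 = v0)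
    (hpE : ∀ i, i < s + ℓ → E (p i) (p (i + 1))) (hcyc : p (s + ℓ) = p s) :
    ∃ π : ℕ → V, π 0 = v0 ∧ (∀ i, E (π i) (π (i + 1))) ∧
      (∀ i, s ≤ i → π (i + ℓ) = π i) ∧
      Tendsto (fun k => (∑ t ∈ range k, (wt (π t) (π (t + 1)) : ℝ)) / (k : ℝ)) atTop
        (nhds ((∑ j ∈ range ℓ, (wt (p (s + j)) (p (s + j + 1)) : ℝ)) / (ℓ : ℝ))) := by
  classical
  set g : ℕ → ℝ := fun j => (wt (p (s + j)) (p (s + j + 1)) : ℝ) with hg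
  set S : ℝ := ∑ j ∈ range ℓ, g j with hS
  set μ : ℝ := S / (ℓ : ℝ) with hμ
  have hℓR : (0:ℝ) < (ℓ : ℝ) := by exact_mod_cast hℓ
  have hSμ : S = μ * ℓ := by rw [hμ]; field_simp
  set π : ℕ → V := fun i => if i < s then p i else p (s + (i - s) % ℓ) with hπ
  have hπa : ∀ i, i ≤ s → π i = p i := by
    intro i hi
    rcases Nat.lt_or_ge i s with h | h
    · exact if_pos h
    · have hi' : i = s := by omega
      simp [hπ, hi']
  have hπb : ∀ i, s ≤ i → π i = p (s + (i - s) % ℓ) := fun i hi => if_neg (by omega)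
  have hπd : ∀ i, s ≤ i → π (i + 1) = p (s + (i - s) % ℓ + 1) := by
    intro i hi
    rw [hπb (i + 1) (by omega)]
    have h1 : (i + 1 - s) % ℓ = ((i - s) % ℓ + 1) % ℓ := by
      rw [show i + 1 - s = (i - s) + 1 from by omega, mod_succ_eq']
    have hmlt : (i - s) % ℓ < ℓ := Nat.mod_lt _ hℓ
    rcases Nat.lt_or_ge ((i - s) % ℓ + 1) ℓ with h | h
    · rw [h1, Nat.mod_eq_of_lt h, ← Nat.add_assoc]
    · have heq : (i - s) % ℓ + 1 = ℓ := by omega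
      rw [h1, heq, Nat.mod_self, Nat.add_zero,
        show s + (i - s) % ℓ + 1 = s + ℓ from by omega, hcyc]
  refine ⟨π, ?_, ?_, ?_, ?_⟩
  · rw [hπa 0 (Nat.zero_le s), hp0]
  · intro i
    rcases Nat.lt_or_ge i s with h | h
    · rw [hπa i (by omega), hπa (i+1) (by omega)]
      exact hpE i (by omega)
    · rw [hπb i h, hπd i h]
      exact hpE (s + (i - s) % ℓ) (by have := Nat.mod_lt (i - s) hℓ; omega)
  · intro i hi
    rw [hπb (i + ℓ) (by omega), hπb i hi,
      show i + ℓ - s = (i - s) + ℓ from by omega, Nat.add_mod_right]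
  · -- convergence
    have hw2 : ∀ t, (wt (π (s + t)) (π (s + t + 1)) : ℝ) = g (t % ℓ) := by
      intro t
      rw [hπb (s + t) (by omega), hπd (s + t) (by omega), Nat.add_sub_cancel_left]
    set C : ℝ := ∑ t ∈ range s, (wt (π t) (π (t + 1)) : ℝ) with hC
    have hsum : ∀ k, s ≤ k → ∑ t ∈ range k, (wt (π t) (π (t + 1)) : ℝ)
        = C + (((k - s) / ℓ : ℕ) : ℝ) * S + ∑ j ∈ range ((k - s) % ℓ), g j := by
      intro k hk
      conv_lhs => rw [show k = s + (k - s) from by omega]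
      rw [Finset.sum_range_add, add_assoc]
      congr 1
      have h := Finset.sum_congr rfl (fun t (_ : t ∈ range (k - s)) => hw2 t)
      rw [h, periodic_sum' g ℓ hℓ (k - s)]
    set G : ℝ := ∑ j ∈ range ℓ, |g j| with hG
    have hG0 : 0 ≤ G := Finset.sum_nonneg fun j _ => abs_nonneg _
    have hrem : ∀ r, r ≤ ℓ → |∑ j ∈ range r, g j| ≤ G := by
      intro r hr
      calc |∑ j ∈ range r, g j| ≤ ∑ j ∈ range r, |g j| := Finset.abs_sum_le_sum_abs _ _
        _ ≤ G := Finset.sum_le_sum_of_subset_of_nonneg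
            (Finset.range_subset_range.2 hr) (fun j _ _ => abs_nonneg _)
    set D : ℝ := |C| + |μ| * s + |μ| * ℓ + G with hD
    have hbound : ∀ k, s ≤ k → |(∑ t ∈ range k, (wt (π t) (π (t + 1)) : ℝ)) - μ * k| ≤ D := by
      intro k hk
      rw [hsum k hk]
      set m : ℕ := k - s with hm
      set q : ℕ := m / ℓ with hqdef
      set r : ℕ := m % ℓ with hrdef
      have h1 : ℓ * q + r = m := Nat.div_add_mod m ℓ
      have h1R : (ℓ:ℝ) * (q:ℝ) + (r:ℝ) = (m:ℝ) := by exact_mod_cast h1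
      have hmR : (m:ℝ) = (k:ℝ) - (s:ℝ) := by
        rw [hm]; push_cast [Nat.cast_sub hk]; ring
      have h2 : (q:ℝ) * S = μ * ((k:ℝ) - s - r) := by
        rw [hSμ, show (q:ℝ) * (μ * ℓ) = μ * ((ℓ:ℝ) * (q:ℝ)) from by ring]
        congr 1
        linarith
      have hrℓ : (r : ℝ) ≤ (ℓ : ℝ) := by
        exact_mod_cast (Nat.mod_lt m hℓ).le
      set R : ℝ := ∑ j ∈ range r, g j with hR
      have hRG : |R| ≤ G := hrem r (by exact_mod_cast hrℓ)
      have heq : C + (q:ℝ) * S + R - μ * k = C - μ * s - μ * r + R := by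
        rw [h2]; ring
      rw [heq]
      have t1 : |C - μ * s - μ * r + R| ≤ |C - μ * s - μ * r| + |R| := abs_add_le _ _
      have t2 : |C - μ * s - μ * r| ≤ |C - μ * s| + |μ * r| := abs_sub_le_abs_add_abs _ _
      have t3 : |C - μ * s| ≤ |C| + |μ * s| := abs_sub_le_abs_add_abs _ _
      have t4 : |μ * (s:ℝ)| = |μ| * s := by
        rw [abs_mul, Nat.abs_cast]
      have t5 : |μ * (r:ℝ)| ≤ |μ| * ℓ := by
        rw [abs_mul, Nat.abs_cast]
        exact mul_le_mul_of_nonneg_left hrℓ (abs_nonneg _)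
      rw [hD]
      linarith
    -- squeeze
    have hDk : Tendsto (fun k : ℕ => D / (k:ℝ)) atTop (nhds 0) :=
      tendsto_const_div_atTop_nhds_zero_nat D
    have hlo : Tendsto (fun k : ℕ => μ - D / (k:ℝ)) atTop (nhds μ) := by
      simpa using tendsto_const_nhds.sub hDk
    have hhi : Tendsto (fun k : ℕ => μ + D / (k:ℝ)) atTop (nhds μ) := by
      simpa using tendsto_const_nhds.add hDk
    apply tendsto_of_tendsto_of_tendsto_of_le_of_le' hlo hhi
    · filter_upwards [eventually_ge_atTop (max s 1)] with k hk
      have hks : s ≤ k := le_trans (le_max_left _ _) hk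
      have hk1 : 1 ≤ k := le_trans (le_max_right _ _) hk
      have hk0 : (0:ℝ) < (k:ℝ) := by exact_mod_cast hk1
      have hb := (abs_le.1 (hbound k hks)).1
      rw [le_div_iff₀ hk0]
      have : (μ - D / (k:ℝ)) * (k:ℝ) = μ * k - D := by
        field_simp
      rw [this]
      linarith
    · filter_upwards [eventually_ge_atTop (max s 1)] with k hk
      have hks : s ≤ k := le_trans (le_max_left _ _) hk
      have hk1 : 1 ≤ k := le_trans (le_max_right _ _) hk
      have hk0 : (0:ℝ) < (k:ℝ) := by exact_mod_cast hk1
      have hb := (abs_le.1 (hbound k hks)).2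
      rw [div_le_iff₀ hk0]
      have : (μ + D / (k:ℝ)) * (k:ℝ) = μ * k + D := by
        field_simp
      rw [this]
      linarith
private lemma prefix_bound {V : Type*} [Fintype V] (E : V → V → Prop) (wt : V → V → ℚ)
    (v0 : V) (μ W : ℝ) (hW0 : 0 ≤ W) (hWb : ∀ u v : V, |(wt u v : ℝ)| ≤ W) (hμW : μ ≤ W)
    (hμmin : ∀ (p : ℕ → V) (s ℓ : ℕ), 0 < ℓ → ℓ ≤ Fintype.card V → p 0 = v0 →
      (∀ i, i < s + ℓ → E (p i) (p (i + 1))) → p (s + ℓ) = p s →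
      μ * ℓ ≤ ∑ j ∈ range ℓ, (wt (p (s + j)) (p (s + j + 1)) : ℝ)) :
    ∀ (k : ℕ) (p : ℕ → V), p 0 = v0 → (∀ t, t < k → E (p t) (p (t + 1))) →
      μ * k - 2 * (Fintype.card V : ℝ) * W ≤ ∑ t ∈ range k, (wt (p t) (p (t + 1)) : ℝ) := by
  classical
  set n := Fintype.card V with hn
  intro k
  induction k using Nat.strong_induction_on with
  | _ k ih =>
    intro p hp0 hpE
    by_cases hk : k ≤ n
    · -- short case
      have hlow : ∀ t ∈ range k, -W ≤ (wt (p t) (p (t + 1)) : ℝ) := fun t _ =>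
        neg_le_of_abs_le (hWb _ _)
      have hsum : -(k : ℝ) * W ≤ ∑ t ∈ range k, (wt (p t) (p (t + 1)) : ℝ) := by
        have := Finset.sum_le_sum hlow
        simpa [Finset.sum_const, Finset.card_range, neg_mul] using this
      have hkn : (k : ℝ) ≤ (n : ℝ) := by exact_mod_cast hk
      have h1 : μ * k ≤ W * k := mul_le_mul_of_nonneg_right hμW (by positivity)
      have h2 : W * k ≤ W * n := mul_le_mul_of_nonneg_left hkn hW0
      nlinarith
    · push_neg at hk
      obtain ⟨i, j, hij, hjn, hpij⟩ := pigeon p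
      set d : ℕ := j - i with hd
      have hd0 : 0 < d := by omega
      have hcyc : p (i + d) = p i := by
        rw [show i + d = j from by omega, hpij]
      -- cycle bound
      have hcb : μ * d ≤ ∑ t ∈ range d, (wt (p (i + t)) (p (i + t + 1)) : ℝ) := by
        apply hμmin p i d hd0 (by omega) hp0
        · intro t ht
          exact hpE t (by omega)
        · exact hcyc
      -- spliced path
      set q : ℕ → V := fun t => if t < i then p t else p (t + d) with hq
      have hq0 : q 0 = v0 := by
        rcases Nat.eq_zero_or_pos i with h0 | h0
        · have e : q 0 = p (0 + d) := if_neg (by omega)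
          rw [h0] at hcyc
          rw [e, hcyc]
          exact hp0
        · rw [show q 0 = p 0 from if_pos h0, hp0]
      have hqE : ∀ t, t < k - d → E (q t) (q (t + 1)) := by
        intro t ht
        rcases Nat.lt_or_ge t i with h | h
        · have e1 : q t = p t := if_pos h
          have e2 : q (t + 1) = p (t + 1) := by
            rcases Nat.lt_or_ge (t + 1) i with h' | h'
            · exact if_pos h'
            · have hti : t + 1 = i := by omega
              have e2' : q (t + 1) = p (t + 1 + d) := if_neg (by omega)
              rw [e2', show t + 1 + d = i + d from by omega, hcyc, hti]
          rw [e1, e2]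
          exact hpE t (by omega)
        · have e1 : q t = p (t + d) := if_neg (by omega)
          have e2 : q (t + 1) = p (t + 1 + d) := if_neg (by omega)
          rw [e1, e2, show t + 1 + d = t + d + 1 from by omega]
          exact hpE (t + d) (by omega)
      have hih := ih (k - d) (by omega) q hq0 hqE
      have hsplice := splice_sum wt p i d k hcyc (by omega)
      rw [← hq] at hsplice
      rw [hsplice] at hih
      have hkd : ((k - d : ℕ) : ℝ) = (k : ℝ) - (d : ℝ) := by
        push_cast [Nat.cast_sub (show d ≤ k by omega)]
        ring
      rw [hkd] at hih
      nlinarith [hcb, hih]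

/-- In a finite weighted graph with some infinite path from `v0`, the infimum of
limit-average values is attained by an ultimately periodic path whose partial
averages converge, and this minimal value equals the minimum of the average
weights of reachable cycles. -/
theorem limAvg_inf_attained {V : Type*} [Fintype V]
    (E : V → V → Prop) (wt : V → V → ℚ) (v0 : V)
    (hne : ∃ π : ℕ → V, π 0 = v0 ∧ ∀ i, E (π i) (π (i + 1))) :
    ∃ π : ℕ → V, (π 0 = v0 ∧ ∀ i, E (π i) (π (i + 1))) ∧
      (∀ π' : ℕ → V, π' 0 = v0 → (∀ i, E (π' i) (π' (i + 1))) →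
        pathLimAvg wt π ≤ pathLimAvg wt π') ∧
      (∃ s ℓ : ℕ, 0 < ℓ ∧ ∀ i, s ≤ i → π (i + ℓ) = π i) ∧
      (Filter.liminf
          (fun k => (∑ i ∈ Finset.range k, (wt (π i) (π (i + 1)) : ℝ)) / (k : ℝ)) atTop
        = Filter.limsup
          (fun k => (∑ i ∈ Finset.range k, (wt (π i) (π (i + 1)) : ℝ)) / (k : ℝ)) atTop) ∧
      pathLimAvg wt π ∈ cycleAvgs E wt v0 ∧
      ∀ x ∈ cycleAvgs E wt v0, pathLimAvg wt π ≤ x := by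
  classical
  obtain ⟨π0, hπ00, hπ0E⟩ := hne
  set n := Fintype.card V with hn
  -- a uniform bound on weights
  obtain ⟨W0, hW0b⟩ := Finite.exists_le (fun pr : V × V => |(wt pr.1 pr.2 : ℝ)|)
  set W : ℝ := max W0 0 with hW
  have hW0 : 0 ≤ W := le_max_right _ _
  have hWb : ∀ u v : V, |(wt u v : ℝ)| ≤ W := fun u v =>
    le_trans (hW0b (u, v)) (le_max_left _ _)
  -- the set of averages of short reachable cycles
  set Bset : Set ℝ := {x | ∃ (p : ℕ → V) (s ℓ : ℕ), 0 < ℓ ∧ ℓ ≤ n ∧ p 0 = v0 ∧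
    (∀ i, i < s + ℓ → E (p i) (p (i + 1))) ∧ p (s + ℓ) = p s ∧
    x = (∑ j ∈ range ℓ, (wt (p (s + j)) (p (s + j + 1)) : ℝ)) / (ℓ : ℝ)} with hBdef
  have hBsub : Bset ⊆ cycleAvgs E wt v0 := by
    rintro x ⟨p, s, ℓ, h1, h2, h3, h4, h5, h6⟩
    exact ⟨p, s, ℓ, h1, h3, h4, h5, h6⟩
  have hBfin : Bset.Finite := by
    apply Set.Finite.subset (Set.finite_range (fun qq : (Fin (n+1) → V) × Fin (n+1) =>
      (∑ j ∈ range (qq.2 : ℕ), (wt (qq.1 ⟨j % (n+1), Nat.mod_lt _ (Nat.succ_pos n)⟩)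
        (qq.1 ⟨(j+1) % (n+1), Nat.mod_lt _ (Nat.succ_pos n)⟩) : ℝ)) / ((qq.2 : ℕ) : ℝ)))
    rintro x ⟨p, s, ℓ, h1, h2, h3, h4, h5, h6⟩
    refine ⟨(fun t => p (s + (t : ℕ)), ⟨ℓ, by omega⟩), ?_⟩
    show (∑ j ∈ range ℓ, (wt (p (s + j % (n+1))) (p (s + (j+1) % (n+1))) : ℝ)) / (ℓ : ℝ) = x
    rw [h6]
    congr 1
    apply Finset.sum_congr rfl
    intro j hj
    have hjℓ : j < ℓ := mem_range.1 hj
    rw [Nat.mod_eq_of_lt (by omega), Nat.mod_eq_of_lt (by omega), ← Nat.add_assoc]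
  have hBne : Bset.Nonempty := by
    obtain ⟨i, j, hij, hjn, hije⟩ := pigeon π0
    refine ⟨_, π0, i, j - i, by omega, by omega, hπ00, fun t _ => hπ0E t, ?_, rfl⟩
    rw [show i + (j - i) = j from by omega]
    exact hije.symm
  obtain ⟨μ, hμB, hμle'⟩ := Set.exists_min_image Bset id hBfin hBne
  have hμle : ∀ b ∈ Bset, μ ≤ b := hμle'
  -- μ ≤ W
  have hμW : μ ≤ W := by
    obtain ⟨p, s, ℓ, h1, _, _, _, _, h6⟩ := hμB
    have hℓR : (0:ℝ) < (ℓ : ℝ) := by exact_mod_cast h1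
    rw [h6, div_le_iff₀ hℓR]
    have : ∀ j ∈ range ℓ, (wt (p (s + j)) (p (s + j + 1)) : ℝ) ≤ W := fun j _ =>
      le_of_abs_le (hWb _ _)
    calc ∑ j ∈ range ℓ, (wt (p (s + j)) (p (s + j + 1)) : ℝ)
        ≤ ∑ _j ∈ range ℓ, W := Finset.sum_le_sum this
      _ = W * ℓ := by rw [Finset.sum_const, Finset.card_range, nsmul_eq_mul]; ring
  -- minimality hypothesis for prefix_bound
  have hμmin : ∀ (p : ℕ → V) (s ℓ : ℕ), 0 < ℓ → ℓ ≤ Fintype.card V → p 0 = v0 →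
      (∀ i, i < s + ℓ → E (p i) (p (i + 1))) → p (s + ℓ) = p s →
      μ * ℓ ≤ ∑ j ∈ range ℓ, (wt (p (s + j)) (p (s + j + 1)) : ℝ) := by
    intro p s ℓ h1 h2 h3 h4 h5
    have hℓR : (0:ℝ) < (ℓ : ℝ) := by exact_mod_cast h1
    have hx : (∑ j ∈ range ℓ, (wt (p (s + j)) (p (s + j + 1)) : ℝ)) / (ℓ : ℝ) ∈ Bset :=
      ⟨p, s, ℓ, h1, h2, h3, h4, h5, rfl⟩
    have := hμle _ hx
    rwa [le_div_iff₀ hℓR] at this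
  have hpre := prefix_bound E wt v0 μ W hW0 hWb hμW hμmin
  -- every infinite path from v0 has limit-average at least μ
  have hlow : ∀ π' : ℕ → V, π' 0 = v0 → (∀ i, E (π' i) (π' (i + 1))) →
      μ ≤ pathLimAvg wt π' := by
    intro π' h0 hE
    set Cst : ℝ := 2 * (n : ℝ) * W with hCst
    set f : ℕ → ℝ := fun k => (∑ i ∈ range k, (wt (π' i) (π' (i + 1)) : ℝ)) / (k : ℝ) with hf
    have hev : ∀ᶠ (k : ℕ) in atTop, μ - Cst / (k : ℝ) ≤ f k := by
      filter_upwards [eventually_ge_atTop 1] with k hk1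
      have hk0 : (0:ℝ) < (k : ℝ) := by exact_mod_cast hk1
      have hp := hpre k π' h0 (fun t _ => hE t)
      rw [hf]
      simp only
      rw [le_div_iff₀ hk0]
      have : (μ - Cst / (k:ℝ)) * (k:ℝ) = μ * k - Cst := by field_simp
      rw [this]
      exact hp
    have hfb : IsBoundedUnder (· ≤ ·) atTop f := by
      apply isBoundedUnder_of_eventually_le (a := W)
      filter_upwards [eventually_ge_atTop 1] with k hk1
      have hk0 : (0:ℝ) < (k : ℝ) := by exact_mod_cast hk1
      rw [hf]
      simp only
      rw [div_le_iff₀ hk0]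
      have hb : ∀ t ∈ range k, (wt (π' t) (π' (t + 1)) : ℝ) ≤ W := fun t _ =>
        le_of_abs_le (hWb _ _)
      calc ∑ t ∈ range k, (wt (π' t) (π' (t + 1)) : ℝ)
          ≤ ∑ _t ∈ range k, W := Finset.sum_le_sum hb
        _ = W * k := by rw [Finset.sum_const, Finset.card_range, nsmul_eq_mul]; ring
    have hlo_t : Tendsto (fun k : ℕ => μ - Cst / (k : ℝ)) atTop (nhds μ) := by
      simpa using tendsto_const_nhds.sub (tendsto_const_div_atTop_nhds_zero_nat Cst)
    calc μ = limsup (fun k : ℕ => μ - Cst / (k : ℝ)) atTop := hlo_t.limsup_eq.symm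
      _ ≤ limsup f atTop :=
        limsup_le_limsup hev (hlo_t.isBoundedUnder_ge.isCoboundedUnder_le) hfb
      _ = pathLimAvg wt π' := rfl
  -- build the minimizing lasso path
  obtain ⟨p, s, ℓ, hℓ0, hℓn, hp0, hpEc, hcyc, hμeq⟩ := id hμB
  obtain ⟨π, hπ0, hπE, hper, hT⟩ := loop_path E wt v0 p s ℓ hℓ0 hp0 hpEc hcyc
  rw [← hμeq] at hT
  have hlim : pathLimAvg wt π = μ := hT.limsup_eq
  refine ⟨π, ⟨hπ0, hπE⟩, ?_, ⟨s, ℓ, hℓ0, hper⟩, ?_, ?_, ?_⟩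
  · intro π' h0 hE
    rw [hlim]
    exact hlow π' h0 hE
  · rw [hT.liminf_eq, hT.limsup_eq]
  · rw [hlim]
    exact hBsub hμB
  · intro x hx
    rw [hlim]
    obtain ⟨p', s', ℓ', hℓ0', hp0', hpE', hcyc', hxeq⟩ := hx
    obtain ⟨π'', h0'', hE'', _, hT''⟩ := loop_path E wt v0 p' s' ℓ' hℓ0' hp0' hpE' hcyc'
    rw [← hxeq] at hT''
    have hx'' : pathLimAvg wt π'' = x := hT''.limsup_eq
    have := hlow π'' h0'' hE''
    rw [hx''] at this
    exact this
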